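/- If a weighted graph (Γ,μ) satisfies (p0), the volume doubling property (VD), and max_{y∈B(x,R)} E_y(x,R) ≤ C·E(x,R) for all x∈Γ, R>0, then there is c>0 such that E(x,R) ≥ c·R² for all x∈Γ, R>0 (equivalently, the time-doubling exponent β satisfies β ≥ 2). -/

import Mathlib

open Classical

noncomputable section

/-- A weighted graph: symmetric nonnegative edge weights, zero on the diagonal,
positive exactly on edges, with finitely many neighbours at each vertex. -/
structure WeightedGraph (V : Type*) where
  w : V → V → ℝ
  w_symm : ∀ x y, w x y = w y x
  w_nonneg : ∀ x y, 0 ≤ w x y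
  w_irrefl : ∀ x, w x x = 0
  locFin : ∀ x, {y | 0 < w x y}.Finite

/-- A space-time scale function is proper. -/
def properF (F : ℕ → ℝ) : Prop :=
  StrictMono F ∧
  (∃ D : ℝ, 0 < D ∧ ∀ R : ℕ, F (2 * R) ≤ D * F R) ∧
  (∀ R S : ℕ, F R + F S ≤ F (R + S)) ∧
  (∃ (A : ℕ) (B : ℝ), 1 < A ∧ 1 < B ∧ ∀ R : ℕ, B * F R ≤ F (A * R)) ∧
  (∃ c : ℝ, 0 < c ∧ ∀ R : ℕ, c * (R : ℝ) ^ 2 ≤ F R)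

/-- A proper scale function satisfying the strong anti-doubling property `B_F > A_F`. -/
def veryProperF (F : ℕ → ℝ) : Prop :=
  properF F ∧
  (∃ (A : ℕ) (B : ℝ), 1 < A ∧ (A : ℝ) < B ∧ ∀ R : ℕ, B * F R ≤ F (A * R))

/-- The (generalized) inverse of a scale function. -/
def finvF (F : ℕ → ℝ) (t : ℝ) : ℕ := sInf {R : ℕ | t ≤ F R}

/-- The sub-Gaussian kernel `k(n,R)`: the maximal integer `k ≥ 1` with
`n/k ≤ F(⌊R/k⌋)`, and `0` if there is none. -/
def kkerF (F : ℕ → ℝ) (n R : ℕ) : ℕ :=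
  sSup {k : ℕ | 1 ≤ k ∧ (n : ℝ) / (k : ℝ) ≤ F (R / k)}

namespace WeightedGraph

variable {V : Type*}

/-- The underlying simple graph. -/
def toSimpleGraph (G : WeightedGraph V) : SimpleGraph V where
  Adj x y := 0 < G.w x y
  symm := by
    constructor
    intro x y h
    rw [G.w_symm y x]
    exact h
  loopless := by
    constructor
    intro x h
    rw [G.w_irrefl x] at h
    exact lt_irrefl 0 h

/-- The graph (shortest path) distance. -/
def gdist (G : WeightedGraph V) (x y : V) : ℕ := G.toSimpleGraph.dist x y

/-- The open metric ball `B(x,r) = {y : d(x,y) < r}`. -/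
def ball (G : WeightedGraph V) (x : V) (r : ℝ) : Set V := {y | (G.gdist x y : ℝ) < r}

/-- The sphere `S(x,R) = {y : d(x,y) = R}`. -/
def sphere (G : WeightedGraph V) (x : V) (R : ℕ) : Set V := {y | G.gdist x y = R}

/-- The external boundary of a set. -/
def extBoundary (G : WeightedGraph V) (A : Set V) : Set V :=
  {y | y ∉ A ∧ ∃ x ∈ A, 0 < G.w x y}

/-- The vertex measure `μ(x) = Σ_{y ∼ x} μ_{xy}`. -/
def mu (G : WeightedGraph V) (x : V) : ℝ := ∑' y, G.w x y

/-- The volume `V(x,r) = μ(B(x,r))`. -/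
def vol (G : WeightedGraph V) (x : V) (r : ℝ) : ℝ := ∑' y : G.ball x r, G.mu y.1

/-- The volume of the annulus `v(x,s,r) = V(x,r) - V(x,s)`. -/
def annv (G : WeightedGraph V) (x : V) (s r : ℝ) : ℝ := G.vol x r - G.vol x s

/-- One-step transition probability `P(x,y) = μ_{xy}/μ(x)`. -/
def Pstep (G : WeightedGraph V) (x y : V) : ℝ := G.w x y / G.mu x

/-- `n`-step transition probability. -/
def Pn (G : WeightedGraph V) : ℕ → V → V → ℝ
  | 0, x, y => if x = y then 1 else 0
  | n + 1, x, y => ∑' z, G.Pstep x z * Pn G n z y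

/-- The heat kernel `p_n(x,y) = P_n(x,y)/μ(y)`. -/
def hk (G : WeightedGraph V) (n : ℕ) (x y : V) : ℝ := G.Pn n x y / G.mu y

/-- One step of the walk killed on exiting `A`. -/
def PstepA (G : WeightedGraph V) (A : Set V) (x y : V) : ℝ :=
  if x ∈ A ∧ y ∈ A then G.Pstep x y else 0

/-- `n`-step transition probability of the killed walk. -/
def PnA (G : WeightedGraph V) (A : Set V) : ℕ → V → V → ℝ
  | 0, x, y => if x = y ∧ x ∈ A then 1 else 0
  | n + 1, x, y => ∑' z, G.PstepA A x z * PnA G A n z y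

/-- The local Green kernel `g^A(y,z) = (Σ_k P_k^A(y,z))/μ(z)`. -/
def green (G : WeightedGraph V) (A : Set V) (y z : V) : ℝ :=
  (∑' k, G.PnA A k y z) / G.mu z

/-- The mean exit time `E_z(A) = Σ_{k≥0} P_z(T_A > k) = Σ_k Σ_{y} P_k^A(z,y)`. -/
def meanExit (G : WeightedGraph V) (A : Set V) (z : V) : ℝ :=
  ∑' (k : ℕ), ∑' (y : V), G.PnA A k z y

/-- `E(x,r)`: the mean exit time from the ball `B(x,r)` started at `x`. -/
def mexit (G : WeightedGraph V) (x : V) (r : ℝ) : ℝ := G.meanExit (G.ball x r) x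

/-- `e(x,t) = min{R ∈ ℕ : E(x,R) ≥ t}`, the inverse of the mean exit time. -/
def einv (G : WeightedGraph V) (x : V) (t : ℝ) : ℕ := sInf {R : ℕ | t ≤ G.mexit x R}

/-- `P(T_A < n)` for the walk started at `z`. -/
def exitProbLT (G : WeightedGraph V) (A : Set V) (z : V) (n : ℕ) : ℝ :=
  1 - ∑' y, G.PnA A (n - 1) z y

/-- The local sub-Gaussian kernel `k̲(x,n,R)`. -/
def lker (G : WeightedGraph V) (x : V) (n R : ℕ) : ℕ :=
  sSup {k : ℕ | 1 ≤ k ∧ (n : ℝ) / (k : ℝ) ≤ ⨅ y : G.ball x R, G.mexit y.1 ((R / k : ℕ) : ℝ)}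

/-- `u` is harmonic on `A`. -/
def Harmonic (G : WeightedGraph V) (A : Set V) (u : V → ℝ) : Prop :=
  ∀ x ∈ A, (∑' y, G.Pstep x y * u y) = u x

/-- The Dirichlet form (energy). -/
def dirichletEnergy (G : WeightedGraph V) (f : V → ℝ) : ℝ :=
  (1 / 2) * ∑' p : V × V, G.w p.1 p.2 * (f p.1 - f p.2) ^ 2

/-- The resistance between two disjoint sets. -/
def resistance (G : WeightedGraph V) (A B : Set V) : ℝ :=
  (sInf (G.dirichletEnergy '' {f | (∀ x ∈ A, f x = 1) ∧ ∀ x ∈ B, f x = 0}))⁻¹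

/-- The resistance of the annulus `ρ(x,s,r) = ρ(B(x,s), Γ∖B(x,r))`. -/
def rho (G : WeightedGraph V) (x : V) (s r : ℝ) : ℝ :=
  G.resistance (G.ball x s) (G.ball x r)ᶜ

/-- The kernel of the `(λ,m)`-resolvent `((λ+1)I - P)^{-m}`. -/
def resolventKer (G : WeightedGraph V) (lam : ℝ) (m : ℕ) (x y : V) : ℝ :=
  (∑' k : ℕ, (Nat.choose (k + m - 1) k : ℝ) * (1 + lam) ^ (-((m : ℤ) + (k : ℤ))) * G.Pn k x y) /
    G.mu y

/-- `F(R) = inf_x E(x,R)`. -/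
def Fm (G : WeightedGraph V) (R : ℕ) : ℝ := ⨅ x : V, G.mexit x R

/-- Condition `(p0)`: controlled weights. -/
def P0 (G : WeightedGraph V) (p0 : ℝ) : Prop :=
  ∀ x y : V, 0 < G.w x y → p0 ≤ G.w x y / G.mu x

/-- Condition `(VD)`: volume doubling. -/
def VD (G : WeightedGraph V) : Prop :=
  ∃ D : ℝ, 0 < D ∧ ∀ (x : V) (R : ℝ), 0 < R → G.vol x (2 * R) ≤ D * G.vol x R

/-- Condition `(TC)`: the time comparison principle. -/
def TC (G : WeightedGraph V) : Prop :=
  ∃ C : ℝ, 1 < C ∧ ∀ (x : V) (R : ℝ), 0 < R → ∀ y ∈ G.ball x R,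
    G.mexit x (2 * R) ≤ C * G.mexit y R

/-- Condition `(TD)`: time doubling. -/
def TD (G : WeightedGraph V) : Prop :=
  ∃ D : ℝ, 0 < D ∧ ∀ (x : V) (R : ℝ), 0 ≤ R → G.mexit x (2 * R) ≤ D * G.mexit x R

/-- Condition `(E)`: the mean exit time is uniform in the space. -/
def UniformE (G : WeightedGraph V) : Prop :=
  ∃ C : ℝ, 1 < C ∧ ∀ (x y : V) (R : ℝ), 0 < R → G.mexit x R ≤ C * G.mexit y R

/-- The mean value inequality `(MV)`. -/
def MV (G : WeightedGraph V) : Prop :=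
  ∃ C : ℝ, 0 < C ∧ ∀ (x : V) (R : ℝ) (u : V → ℝ), 0 < R → (∀ y, 0 ≤ u y) →
    G.Harmonic (G.ball x R) u →
    u x ≤ C / G.vol x R * ∑' y : G.ball x R, u y.1 * G.mu y.1

/-- The local diagonal upper estimate `(DUE)`. -/
def DUE (G : WeightedGraph V) : Prop :=
  ∃ C : ℝ, 0 < C ∧ ∀ (x : V) (n : ℕ), 0 < n →
    G.hk n x x ≤ C / G.vol x (G.einv x n)

/-- The off-diagonal upper estimate `(UE)`. -/
def UE (G : WeightedGraph V) : Prop :=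
  ∃ C β c : ℝ, 0 < C ∧ 1 < β ∧ 0 < c ∧ ∀ (x y : V) (n : ℕ), 0 < n →
    G.hk n x y ≤ C / G.vol x (G.einv x n) *
      Real.exp (-(c * (G.mexit x (G.gdist x y) / n) ^ ((1 : ℝ) / (β - 1))))

/-- A nonnegative Dirichlet solution of the heat equation `P^A u_n = u_{n+1}` up to time `N`. -/
def DirSol (G : WeightedGraph V) (A : Set V) (N : ℕ) (u : ℕ → V → ℝ) : Prop :=
  (∀ n y, 0 ≤ u n y) ∧ ∀ n, n < N → ∀ z ∈ A, (∑' y, G.PstepA A z y * u n y) = u (n + 1) z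

/-- The parabolic mean value inequality `(PMV)`. -/
def PMV (G : WeightedGraph V) : Prop :=
  ∃ c1 c2 C : ℝ, 0 ≤ c1 ∧ c1 < c2 ∧ 1 < C ∧
    ∀ (x : V) (R : ℝ) (u : ℕ → V → ℝ), 0 < R →
      G.DirSol (G.ball x R) ⌊c2 * G.mexit x R⌋₊ u →
      u ⌊c2 * G.mexit x R⌋₊ x ≤ C / (G.vol x R * G.mexit x R) *
        ∑ i ∈ Finset.Icc ⌊c1 * G.mexit x R⌋₊ ⌊c2 * G.mexit x R⌋₊,
          ∑' y : G.ball x R, u i y.1 * G.mu y.1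

/-- The skewed parabolic mean value inequality. -/
def SPMV (G : WeightedGraph V) : Prop :=
  ∃ c1 c2 C : ℝ, 0 < c1 ∧ c1 < c2 ∧ 1 ≤ C ∧
    ∀ (x : V) (R : ℝ) (y : V) (u : ℕ → V → ℝ), 0 < R → y ∈ G.ball x R →
      G.DirSol (G.ball x R) ⌊c2 * G.mexit x R⌋₊ u →
      u ⌊c2 * G.mexit x R⌋₊ x ≤ C / (G.vol y (2 * R) * G.mexit y (2 * R)) *
        ∑ i ∈ Finset.Icc ⌊c1 * G.mexit x R⌋₊ ⌊c2 * G.mexit x R⌋₊,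
          ∑' z : G.ball x R, u i z.1 * G.mu z.1

/-- The mean value property for Green kernels `(MVG)`. -/
def MVG (G : WeightedGraph V) : Prop :=
  ∃ C : ℝ, 1 < C ∧ ∀ (x : V) (R : ℝ) (y : V), 0 < R → 0 < G.gdist x y →
    G.green (G.ball x R) y x ≤ C / G.vol x (G.gdist x y) *
      ∑' z : G.ball x (G.gdist x y : ℝ), G.green (G.ball x R) y z.1 * G.mu z.1

/-- The Green kernel bound `(g01)`: `g^B(y,x) ≤ C·E(x,R)/V(x,d(x,y))`. -/
def G01 (G : WeightedGraph V) : Prop :=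
  ∃ C : ℝ, 1 < C ∧ ∀ (x : V) (R : ℝ) (y : V), 0 < R → 0 < G.gdist x y →
    G.green (G.ball x R) y x ≤ C * G.mexit x R / G.vol x (G.gdist x y)

/-- The elliptic Harnack inequality `(H)`. -/
def EH (G : WeightedGraph V) : Prop :=
  ∃ C : ℝ, 0 < C ∧ ∀ (x : V) (R : ℝ) (u : V → ℝ), 0 < R → (∀ y, 0 ≤ u y) →
    G.Harmonic (G.ball x (2 * R)) u → ∀ y ∈ G.ball x R, ∀ z ∈ G.ball x R, u y ≤ C * u z

/-- The sub-Gaussian upper estimate `(UE_F)` with respect to `F`. -/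
def UEF (G : WeightedGraph V) (F : ℕ → ℝ) : Prop :=
  ∃ C c : ℝ, 0 < C ∧ 0 < c ∧ ∀ (x y : V) (n : ℕ), 0 < n →
    G.hk n x y ≤ C / G.vol x (finvF F n) *
      Real.exp (-(c * (kkerF F n (G.gdist x y) : ℝ)))

/-- The sub-Gaussian lower estimate `(LE_F)` with respect to `F`. -/
def LEF (G : WeightedGraph V) (F : ℕ → ℝ) : Prop :=
  ∃ c C : ℝ, 0 < c ∧ 0 < C ∧ ∀ (x y : V) (n : ℕ), 0 < n →
    c / G.vol x (finvF F n) * Real.exp (-(C * (kkerF F n (G.gdist x y) : ℝ))) ≤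
      G.hk n x y + G.hk (n + 1) x y

/-- The `F`-parabolic Harnack inequality. -/
def PHF (G : WeightedGraph V) (F : ℕ → ℝ) : Prop :=
  ∀ c1 c2 c3 c4 η : ℝ, 0 < c1 → c1 < c2 → c2 < c3 → c3 < c4 → 0 < η → η < 1 →
    ∃ CH : ℝ, 0 < CH ∧ ∀ (x : V) (R k : ℕ) (u : ℕ → V → ℝ), 0 < R →
      (∀ n y, 0 ≤ u n y) →
      (∀ n : ℕ, k ≤ n → (n : ℝ) < (k : ℝ) + F ⌊c4 * (R : ℝ)⌋₊ → ∀ z ∈ G.ball x R,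
        (∑' y, G.Pstep z y * u n y) = u (n + 1) z) →
      ∀ (nm np : ℕ), ∀ xm ∈ G.ball x (η * R), ∀ xp ∈ G.ball x (η * R),
        (k : ℝ) + F ⌊c1 * (R : ℝ)⌋₊ ≤ (nm : ℝ) → (nm : ℝ) ≤ (k : ℝ) + F ⌊c2 * (R : ℝ)⌋₊ →
        (k : ℝ) + F ⌊c3 * (R : ℝ)⌋₊ ≤ (np : ℝ) → (np : ℝ) ≤ (k : ℝ) + F ⌊c4 * (R : ℝ)⌋₊ →
        (G.gdist xm xp : ℝ) ≤ (np : ℝ) - (nm : ℝ) →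
        u nm xm ≤ CH * (u np xp + u (np + 1) xp)

end WeightedGraph

open WeightedGraph


namespace WeightedGraph

variable {V : Type*} (G : WeightedGraph V)

lemma w_summable (x : V) : Summable (G.w x) := by
  apply summable_of_ne_finset_zero (s := (G.locFin x).toFinset)
  intro y hy
  by_contra h
  exact hy ((G.locFin x).mem_toFinset.2 (lt_of_le_of_ne (G.w_nonneg x y) (Ne.symm h)))

lemma mu_nonneg (x : V) : 0 ≤ G.mu x := tsum_nonneg fun y => G.w_nonneg x y

lemma adj_iff {x y : V} : G.toSimpleGraph.Adj x y ↔ 0 < G.w x y := Iff.rfl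

lemma exists_adj [Infinite V] (hconn : G.toSimpleGraph.Connected) (x : V) :
    ∃ y, 0 < G.w x y := by
  obtain ⟨y, hy⟩ := exists_ne x
  obtain ⟨p, -⟩ := hconn.exists_walk_length_eq_dist x y
  obtain ⟨z, hadj, q, -⟩ := p.exists_eq_cons_of_ne (Ne.symm hy)
  exact ⟨z, hadj⟩

lemma mu_pos [Infinite V] (hconn : G.toSimpleGraph.Connected) (x : V) : 0 < G.mu x := by
  obtain ⟨y, hy⟩ := G.exists_adj hconn x
  exact lt_of_lt_of_le hy (Summable.le_tsum (G.w_summable x) y fun j _ => G.w_nonneg x j)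

lemma pstep_nonneg (x y : V) : 0 ≤ G.Pstep x y := div_nonneg (G.w_nonneg x y) (G.mu_nonneg x)

lemma pstep_summable (x : V) : Summable (G.Pstep x) := (G.w_summable x).div_const _

lemma tsum_pstep [Infinite V] (hconn : G.toSimpleGraph.Connected) (x : V) :
    ∑' y, G.Pstep x y = 1 := by
  unfold Pstep
  rw [tsum_div_const]
  exact div_self (ne_of_gt (G.mu_pos hconn x))

lemma pstep_le_one [Infinite V] (hconn : G.toSimpleGraph.Connected) (x y : V) :
    G.Pstep x y ≤ 1 := by
  rw [← G.tsum_pstep hconn x]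
  exact Summable.le_tsum (G.pstep_summable x) y fun j _ => G.pstep_nonneg x j

lemma p0_le_one [Infinite V] (hconn : G.toSimpleGraph.Connected) {p0 : ℝ}
    (hP0 : G.P0 p0) (x : V) : p0 ≤ 1 := by
  obtain ⟨y, hy⟩ := G.exists_adj hconn x
  exact le_trans (hP0 x y hy) (G.pstep_le_one hconn x y)

lemma closedBall_finite (hconn : G.toSimpleGraph.Connected) (x : V) (n : ℕ) :
    {y | G.gdist x y ≤ n}.Finite := by
  induction n with
  | zero =>
    apply Set.Finite.subset (Set.finite_singleton x)
    intro y hy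
    have : G.gdist x y = 0 := Nat.le_zero.1 hy
    have := (hconn.dist_eq_zero_iff).1 this
    simp [this.symm]
  | succ n ih =>
    apply Set.Finite.subset (ih.union (Set.Finite.biUnion ih (fun z _ => G.locFin z)))
    intro y hy
    by_cases hle : G.gdist x y ≤ n
    · exact Or.inl hle
    · right
      have hne : y ≠ x := by
        intro h; subst h
        exact hle (by simp [gdist, SimpleGraph.dist_self])
      obtain ⟨p, hp⟩ := hconn.exists_walk_length_eq_dist x y
      obtain ⟨z, hadj, q, hq⟩ := p.reverse.exists_eq_cons_of_ne hne
      have hql : q.length + 1 = G.gdist x y := by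
        have := congrArg SimpleGraph.Walk.length hq
        rw [SimpleGraph.Walk.length_reverse, hp] at this
        simpa [SimpleGraph.Walk.length_cons, gdist] using this.symm
      have hzd : G.gdist x z ≤ n := by
        have h1 : G.gdist x z ≤ q.length := by
          have := SimpleGraph.dist_le q.reverse
          simpa [SimpleGraph.Walk.length_reverse, gdist] using this
        have hy2 : G.gdist x y ≤ n + 1 := hy
        have hb : G.gdist x y = G.toSimpleGraph.dist x y := rfl
        have hb2 : G.gdist x z = G.toSimpleGraph.dist x z := rfl
        omega
      refine Set.mem_biUnion hzd ?_
      show 0 < G.w z y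
      rw [G.w_symm]
      exact hadj

lemma ball_finite (hconn : G.toSimpleGraph.Connected) (x : V) (r : ℝ) :
    (G.ball x r).Finite := by
  apply Set.Finite.subset (G.closedBall_finite hconn x ⌈r⌉₊)
  intro y hy
  have : (G.gdist x y : ℝ) < (⌈r⌉₊ : ℝ) := lt_of_lt_of_le hy (Nat.le_ceil r)
  exact le_of_lt (Nat.cast_lt.1 this)

end WeightedGraph

namespace WeightedGraph

variable {V : Type*} (G : WeightedGraph V) (A : Set V)

lemma pstepA_nonneg (x y : V) : 0 ≤ G.PstepA A x y := by
  unfold PstepA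
  split
  · exact G.pstep_nonneg x y
  · exact le_refl 0

lemma pstepA_le_pstep (x y : V) : G.PstepA A x y ≤ G.Pstep x y := by
  unfold PstepA
  split
  · exact le_refl _
  · exact G.pstep_nonneg x y

lemma pstepA_eq_zero_of_left {x : V} (hx : x ∉ A) (y : V) : G.PstepA A x y = 0 := by
  unfold PstepA
  rw [if_neg]
  tauto

lemma pstepA_eq_zero_of_right {y : V} (hy : y ∉ A) (x : V) : G.PstepA A x y = 0 := by
  unfold PstepA
  rw [if_neg]
  tauto

lemma pnA_nonneg (n : ℕ) (x y : V) : 0 ≤ G.PnA A n x y := by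
  induction n generalizing x y with
  | zero =>
    simp only [PnA]
    split
    · exact zero_le_one
    · exact le_refl 0
  | succ n ih =>
    exact tsum_nonneg fun z => mul_nonneg (G.pstepA_nonneg A x z) (ih z y)

lemma pnA_eq_zero_of_right {y : V} (hy : y ∉ A) (n : ℕ) (x : V) : G.PnA A n x y = 0 := by
  induction n generalizing x with
  | zero =>
    simp only [PnA]
    rw [if_neg]
    rintro ⟨rfl, hx⟩
    exact hy hx
  | succ n ih =>
    simp only [PnA]
    have : ∀ z : V, G.PstepA A x z * G.PnA A n z y = 0 := fun z => by rw [ih z, mul_zero]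
    simp [this]

lemma pnA_eq_zero_of_left {x : V} (hx : x ∉ A) (n : ℕ) (y : V) : G.PnA A n x y = 0 := by
  cases n with
  | zero =>
    simp only [PnA]
    rw [if_neg]
    rintro ⟨rfl, hx'⟩
    exact hx hx'
  | succ n =>
    simp only [PnA]
    have : ∀ z : V, G.PstepA A x z * G.PnA A n z y = 0 := fun z => by
      rw [G.pstepA_eq_zero_of_left A hx z, zero_mul]
    simp [this]

lemma pnA_summable (hA : A.Finite) (n : ℕ) (x : V) : Summable (fun y => G.PnA A n x y) := by
  apply summable_of_ne_finset_zero (s := hA.toFinset)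
  intro y hy
  exact G.pnA_eq_zero_of_right A (fun h => hy (hA.mem_toFinset.2 h)) n x

/-- Survival probability `P_z(T_A > n)`. -/
def SP (n : ℕ) (z : V) : ℝ := ∑' y, G.PnA A n z y

lemma SP_eq_sum (hA : A.Finite) (n : ℕ) (z : V) :
    G.SP A n z = ∑ y ∈ hA.toFinset, G.PnA A n z y := by
  apply tsum_eq_sum
  intro y hy
  exact G.pnA_eq_zero_of_right A (fun h => hy (hA.mem_toFinset.2 h)) n z

lemma SP_nonneg (n : ℕ) (z : V) : 0 ≤ G.SP A n z :=
  tsum_nonneg fun y => G.pnA_nonneg A n z y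

lemma SP_zero_of_not_mem {z : V} (hz : z ∉ A) (n : ℕ) : G.SP A n z = 0 := by
  unfold SP
  have : ∀ y : V, G.PnA A n z y = 0 := fun y => G.pnA_eq_zero_of_left A hz n y
  simp [this]

lemma SP_zero_mem {z : V} (hz : z ∈ A) : G.SP A 0 z = 1 := by
  unfold SP
  rw [tsum_eq_sum (s := {z}) (f := fun y => G.PnA A 0 z y)]
  · simp [PnA, hz]
  · intro y hy
    simp only [PnA]
    rw [if_neg]
    rintro ⟨rfl, -⟩
    exact hy (Finset.mem_singleton_self z)

lemma SP_succ (hA : A.Finite) (n : ℕ) (z : V) :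
    G.SP A (n + 1) z = ∑ w ∈ hA.toFinset, G.PstepA A z w * G.SP A n w := by
  unfold SP
  simp only [PnA]
  rw [tsum_eq_sum (s := hA.toFinset)]
  · have hin : ∀ y : V, (∑' w, G.PstepA A z w * G.PnA A n w y)
        = ∑ w ∈ hA.toFinset, G.PstepA A z w * G.PnA A n w y := by
      intro y
      apply tsum_eq_sum
      intro w hw
      rw [G.pstepA_eq_zero_of_right A (fun h => hw (hA.mem_toFinset.2 h)) z, zero_mul]
    rw [Finset.sum_congr rfl fun y _ => hin y, Finset.sum_comm]
    apply Finset.sum_congr rfl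
    intro w _
    rw [← Finset.mul_sum]
    congr 1
    exact (G.SP_eq_sum A hA n w).symm
  · intro y hy
    have : ∀ w : V, G.PstepA A z w * G.PnA A n w y = 0 := fun w => by
      rw [G.pnA_eq_zero_of_right A (fun h => hy (hA.mem_toFinset.2 h)) n w, mul_zero]
    simp [this]

lemma sum_pstepA_le_one [Infinite V] (hconn : G.toSimpleGraph.Connected)
    (s : Finset V) (z : V) : ∑ w ∈ s, G.PstepA A z w ≤ 1 := by
  calc ∑ w ∈ s, G.PstepA A z w ≤ ∑ w ∈ s, G.Pstep z w :=
        Finset.sum_le_sum fun w _ => G.pstepA_le_pstep A z w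
    _ ≤ ∑' w, G.Pstep z w := Summable.sum_le_tsum s (fun w _ => G.pstep_nonneg z w) (G.pstep_summable z)
    _ = 1 := G.tsum_pstep hconn z

lemma SP_le_one [Infinite V] (hconn : G.toSimpleGraph.Connected) (hA : A.Finite)
    (n : ℕ) (z : V) : G.SP A n z ≤ 1 := by
  induction n generalizing z with
  | zero =>
    by_cases hz : z ∈ A
    · exact le_of_eq (G.SP_zero_mem A hz)
    · rw [G.SP_zero_of_not_mem A hz]; exact zero_le_one
  | succ n ih =>
    rw [G.SP_succ A hA]
    calc ∑ w ∈ hA.toFinset, G.PstepA A z w * G.SP A n w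
        ≤ ∑ w ∈ hA.toFinset, G.PstepA A z w := by
          apply Finset.sum_le_sum
          intro w _
          exact mul_le_of_le_one_right (G.pstepA_nonneg A z w) (ih w)
      _ ≤ 1 := G.sum_pstepA_le_one A hconn _ z

end WeightedGraph

namespace WeightedGraph

variable {V : Type*} [Infinite V] (G : WeightedGraph V) (A : Set V)

lemma SP_antitone (hconn : G.toSimpleGraph.Connected) (hA : A.Finite) (n : ℕ) (z : V) :
    G.SP A (n + 1) z ≤ G.SP A n z := by
  induction n generalizing z with
  | zero =>
    by_cases hz : z ∈ A
    · rw [G.SP_zero_mem A hz]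
      exact G.SP_le_one A hconn hA 1 z
    · rw [G.SP_zero_of_not_mem A hz, G.SP_zero_of_not_mem A hz]
  | succ n ih =>
    rw [G.SP_succ A hA, G.SP_succ A hA]
    apply Finset.sum_le_sum
    intro w _
    exact mul_le_mul_of_nonneg_left (ih w) (G.pstepA_nonneg A z w)

lemma escape (hconn : G.toSimpleGraph.Connected) (hA : A.Finite)
    {p0 : ℝ} (hp0 : 0 < p0) (hP0 : G.P0 p0) :
    ∀ {w v : V} (p : G.toSimpleGraph.Walk w v), v ∉ A →
      ∀ n, p.length ≤ n → G.SP A n w ≤ 1 - p0 ^ p.length := by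
  have hp1 : p0 ≤ 1 := G.p0_le_one hconn hP0 (Classical.arbitrary V)
  intro w v p
  induction p with
  | nil =>
    intro hv n _
    rw [SimpleGraph.Walk.length_nil, pow_zero]
    rw [G.SP_zero_of_not_mem A hv]
    norm_num
  | @cons a b c hadj q ih =>
    intro hv n hn
    rw [SimpleGraph.Walk.length_cons] at hn ⊢
    have hpow1 : p0 ^ q.length ≤ 1 := pow_le_one₀ (le_of_lt hp0) hp1
    have hpow0 : (0:ℝ) ≤ p0 ^ q.length := le_of_lt (pow_pos hp0 _)
    by_cases ha : a ∈ A
    · obtain ⟨m, rfl⟩ : ∃ m, n = m + 1 := ⟨n - 1, by omega⟩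
      have hq : q.length ≤ m := by omega
      have hb : G.SP A m b ≤ 1 - p0 ^ q.length := ih hv m hq
      rw [G.SP_succ A hA]
      have hstep : ∀ w ∈ hA.toFinset, G.PstepA A a w * G.SP A m w ≤
          G.Pstep a w * (if w = b then 1 - p0 ^ q.length else 1) := by
        intro w _
        by_cases hwb : w = b
        · subst hwb
          rw [if_pos rfl]
          exact mul_le_mul (G.pstepA_le_pstep A a w) hb (G.SP_nonneg A m w)
            (G.pstep_nonneg a w)
        · rw [if_neg hwb]
          rw [mul_one]
          calc G.PstepA A a w * G.SP A m w ≤ G.PstepA A a w * 1 :=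
                mul_le_mul_of_nonneg_left (G.SP_le_one A hconn hA m w) (G.pstepA_nonneg A a w)
            _ = G.PstepA A a w := mul_one _
            _ ≤ G.Pstep a w := G.pstepA_le_pstep A a w
      have h1 : ∑ w ∈ hA.toFinset, G.PstepA A a w * G.SP A m w ≤
          ∑ w ∈ insert b hA.toFinset, G.Pstep a w * (if w = b then 1 - p0 ^ q.length else 1) := by
        calc ∑ w ∈ hA.toFinset, G.PstepA A a w * G.SP A m w
            ≤ ∑ w ∈ hA.toFinset, G.Pstep a w * (if w = b then 1 - p0 ^ q.length else 1) :=
              Finset.sum_le_sum hstep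
          _ ≤ ∑ w ∈ insert b hA.toFinset, G.Pstep a w * (if w = b then 1 - p0 ^ q.length else 1) := by
              apply Finset.sum_le_sum_of_subset_of_nonneg (Finset.subset_insert b _)
              intro w _ _
              apply mul_nonneg (G.pstep_nonneg a w)
              split <;> [linarith; norm_num]
      have h2 : ∑ w ∈ insert b hA.toFinset, G.Pstep a w * (if w = b then 1 - p0 ^ q.length else 1)
          = (∑ w ∈ insert b hA.toFinset, G.Pstep a w) - G.Pstep a b * p0 ^ q.length := by
        have : ∀ w, G.Pstep a w * (if w = b then 1 - p0 ^ q.length else 1)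
            = G.Pstep a w - (if w = b then G.Pstep a w * p0 ^ q.length else 0) := by
          intro w
          split <;> ring
        rw [Finset.sum_congr rfl fun w _ => this w, Finset.sum_sub_distrib]
        congr 1
        rw [Finset.sum_ite_eq' (insert b hA.toFinset) b (fun w => G.Pstep a w * p0 ^ q.length)]
        rw [if_pos (Finset.mem_insert_self b _)]
      have h3 : ∑ w ∈ insert b hA.toFinset, G.Pstep a w ≤ 1 := by
        calc ∑ w ∈ insert b hA.toFinset, G.Pstep a w ≤ ∑' w, G.Pstep a w :=
              Summable.sum_le_tsum _ (fun w _ => G.pstep_nonneg a w) (G.pstep_summable a)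
          _ = 1 := G.tsum_pstep hconn a
      have h4 : p0 ^ (q.length + 1) ≤ G.Pstep a b * p0 ^ q.length := by
        have := hP0 a b hadj
        calc p0 ^ (q.length + 1) = p0 * p0 ^ q.length := by ring
          _ ≤ G.Pstep a b * p0 ^ q.length := mul_le_mul_of_nonneg_right this hpow0
      calc ∑ w ∈ hA.toFinset, G.PstepA A a w * G.SP A m w
          ≤ (∑ w ∈ insert b hA.toFinset, G.Pstep a w) - G.Pstep a b * p0 ^ q.length := by
            rw [← h2]; exact h1
        _ ≤ 1 - p0 ^ (q.length + 1) := by linarith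
    · rw [G.SP_zero_of_not_mem A ha]
      have : p0 ^ (q.length + 1) ≤ 1 := pow_le_one₀ (le_of_lt hp0) hp1
      linarith

lemma decay (hconn : G.toSimpleGraph.Connected) (hA : A.Finite)
    {p0 : ℝ} (hp0 : 0 < p0) (hP0 : G.P0 p0) :
    ∃ (L : ℕ) (ε : ℝ), 0 < ε ∧ ε ≤ 1 ∧
      ∀ m z, G.SP A (m + L) z ≤ (1 - ε) * G.SP A m z := by
  -- pick a point outside A
  obtain ⟨y0, hy0⟩ := (hA.infinite_compl).nonempty
  have hy0' : y0 ∉ A := hy0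
  set L := hA.toFinset.sup (fun z => G.toSimpleGraph.dist z y0) with hL
  have hp1 : p0 ≤ 1 := G.p0_le_one hconn hP0 y0
  refine ⟨L, p0 ^ L, pow_pos hp0 L, pow_le_one₀ (le_of_lt hp0) hp1, ?_⟩
  have base : ∀ z, G.SP A L z ≤ (1 - p0 ^ L) * G.SP A 0 z := by
    intro z
    by_cases hz : z ∈ A
    · rw [G.SP_zero_mem A hz, mul_one]
      obtain ⟨p, hplen⟩ := hconn.exists_walk_length_eq_dist z y0
      have hlen : p.length ≤ L := by
        rw [hplen]
        exact Finset.le_sup (f := fun z => G.toSimpleGraph.dist z y0) (hA.mem_toFinset.2 hz)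
      have := G.escape A hconn hA hp0 hP0 p hy0' L hlen
      have hmono : p0 ^ L ≤ p0 ^ p.length :=
        pow_le_pow_of_le_one (le_of_lt hp0) hp1 hlen
      linarith
    · rw [G.SP_zero_of_not_mem A hz, G.SP_zero_of_not_mem A hz, mul_zero]
  intro m
  induction m with
  | zero => intro z; simpa using base z
  | succ m ih =>
    intro z
    have : m + 1 + L = (m + L) + 1 := by omega
    rw [this, G.SP_succ A hA, G.SP_succ A hA, Finset.mul_sum]
    apply Finset.sum_le_sum
    intro w _
    calc G.PstepA A z w * G.SP A (m + L) w
        ≤ G.PstepA A z w * ((1 - p0 ^ L) * G.SP A m w) :=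
          mul_le_mul_of_nonneg_left (ih w) (G.pstepA_nonneg A z w)
      _ = (1 - p0 ^ L) * (G.PstepA A z w * G.SP A m w) := by ring

lemma SP_summable (hconn : G.toSimpleGraph.Connected) (hA : A.Finite)
    {p0 : ℝ} (hp0 : 0 < p0) (hP0 : G.P0 p0) (z : V) :
    Summable (fun n => G.SP A n z) := by
  obtain ⟨L, ε, hε, hε1, hdec⟩ := G.decay A hconn hA hp0 hP0
  apply summable_of_sum_range_le (c := L / ε) (fun n => G.SP_nonneg A n z)
  intro N
  have key : ∑ n ∈ Finset.range N, G.SP A n z ≤ L + (1 - ε) * ∑ n ∈ Finset.range N, G.SP A n z := by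
    calc ∑ n ∈ Finset.range N, G.SP A n z
        ≤ ∑ n ∈ Finset.range (L + N), G.SP A n z := by
          apply Finset.sum_le_sum_of_subset_of_nonneg
            (Finset.range_subset_range.2 (by omega))
          intro n _ _
          exact G.SP_nonneg A n z
      _ = (∑ n ∈ Finset.range L, G.SP A n z) + ∑ n ∈ Finset.range N, G.SP A (L + n) z :=
          Finset.sum_range_add _ L N
      _ ≤ (L : ℝ) + (1 - ε) * ∑ n ∈ Finset.range N, G.SP A n z := by
          apply add_le_add
          · calc ∑ n ∈ Finset.range L, G.SP A n z ≤ ∑ n ∈ Finset.range L, 1 :=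
                  Finset.sum_le_sum fun n _ => G.SP_le_one A hconn hA n z
              _ = (L : ℝ) := by simp
          · rw [Finset.mul_sum]
            apply Finset.sum_le_sum
            intro n _
            have := hdec n z
            rw [Nat.add_comm L n]
            exact this
  have hsum_nonneg : 0 ≤ ∑ n ∈ Finset.range N, G.SP A n z :=
    Finset.sum_nonneg fun n _ => G.SP_nonneg A n z
  rw [le_div_iff₀ hε]
  nlinarith [key, hsum_nonneg]

lemma meanExit_eq_tsum_SP (z : V) : G.meanExit A z = ∑' n, G.SP A n z := rfl

lemma meanExit_nonneg (z : V) : 0 ≤ G.meanExit A z :=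
  tsum_nonneg fun n => G.SP_nonneg A n z

lemma meanExit_zero_of_not_mem {z : V} (hz : z ∉ A) : G.meanExit A z = 0 := by
  rw [G.meanExit_eq_tsum_SP]
  have : ∀ n : ℕ, G.SP A n z = 0 := fun n => G.SP_zero_of_not_mem A hz n
  simp [this]

lemma meanExit_identity (hconn : G.toSimpleGraph.Connected) (hA : A.Finite)
    {p0 : ℝ} (hp0 : 0 < p0) (hP0 : G.P0 p0) {z : V} (hz : z ∈ A) :
    G.meanExit A z = 1 + ∑ w ∈ hA.toFinset, G.PstepA A z w * G.meanExit A w := by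
  rw [G.meanExit_eq_tsum_SP]
  rw [Summable.tsum_eq_zero_add (G.SP_summable A hconn hA hp0 hP0 z)]
  rw [G.SP_zero_mem A hz]
  congr 1
  have h1 : ∀ n : ℕ, G.SP A (n + 1) z = ∑ w ∈ hA.toFinset, G.PstepA A z w * G.SP A n w :=
    fun n => G.SP_succ A hA n z
  rw [tsum_congr h1]
  rw [Summable.tsum_finsetSum (fun w _ => (G.SP_summable A hconn hA hp0 hP0 w).mul_left (G.PstepA A z w))]
  apply Finset.sum_congr rfl
  intro w _
  rw [tsum_mul_left]
  rfl

lemma meanExit_mu_identity (hconn : G.toSimpleGraph.Connected) (hA : A.Finite)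
    {p0 : ℝ} (hp0 : 0 < p0) (hP0 : G.P0 p0) {z : V} (hz : z ∈ A) :
    G.mu z * G.meanExit A z = G.mu z + ∑ w ∈ hA.toFinset, G.w z w * G.meanExit A w := by
  have hid := G.meanExit_identity A hconn hA hp0 hP0 hz
  have hmu : G.mu z ≠ 0 := ne_of_gt (G.mu_pos hconn z)
  rw [hid, mul_add, mul_one, Finset.mul_sum]
  congr 1
  apply Finset.sum_congr rfl
  intro w hw
  have hwA : w ∈ A := hA.mem_toFinset.1 hw
  unfold PstepA Pstep
  rw [if_pos ⟨hz, hwA⟩]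
  field_simp

end WeightedGraph

lemma clamp_lipschitz (a b : ℝ) :
    |max 0 (min 1 a) - max 0 (min 1 b)| ≤ |a - b| := by
  have h1 : |max 0 (min 1 a) - max 0 (min 1 b)| ≤ |min 1 a - min 1 b| := by
    rw [max_comm 0 (min 1 a), max_comm 0 (min 1 b)]
    exact abs_max_sub_max_le_abs _ _ _
  have h2 : |min 1 a - min 1 b| ≤ |a - b| := by
    have h3 := abs_max_sub_max_le_abs (-a) (-b) (-1)
    rw [max_neg_neg, max_neg_neg] at h3
    rw [min_comm a 1, min_comm b 1] at h3
    calc |min 1 a - min 1 b| = |-min 1 a - -min 1 b| := by rw [← abs_neg]; ring_nf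
      _ ≤ |-a - -b| := h3
      _ = |a - b| := by rw [← abs_neg]; ring_nf
  exact le_trans h1 h2

namespace WeightedGraph

variable {V : Type*} [Infinite V] (G : WeightedGraph V) (A : Set V)

lemma sym_identity (T : Finset V) (g h : V → ℝ) :
    ∑ y ∈ T, ∑ z ∈ T, G.w y z * (g y * (h y - h z))
      = (1 / 2) * ∑ y ∈ T, ∑ z ∈ T, G.w y z * ((g y - g z) * (h y - h z)) := by
  have hswap : ∑ y ∈ T, ∑ z ∈ T, G.w y z * (g z * (h y - h z))
      = - ∑ y ∈ T, ∑ z ∈ T, G.w y z * (g y * (h y - h z)) := by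
    rw [Finset.sum_comm]
    rw [← Finset.sum_neg_distrib]
    apply Finset.sum_congr rfl
    intro y _
    rw [← Finset.sum_neg_distrib]
    apply Finset.sum_congr rfl
    intro z _
    rw [G.w_symm z y]
    ring
  have hexpand : ∑ y ∈ T, ∑ z ∈ T, G.w y z * ((g y - g z) * (h y - h z))
      = (∑ y ∈ T, ∑ z ∈ T, G.w y z * (g y * (h y - h z)))
        - ∑ y ∈ T, ∑ z ∈ T, G.w y z * (g z * (h y - h z)) := by
    rw [← Finset.sum_sub_distrib]
    apply Finset.sum_congr rfl
    intro y _
    rw [← Finset.sum_sub_distrib]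
    apply Finset.sum_congr rfl
    intro z _
    ring
  rw [hexpand, hswap]
  ring

lemma sum_green (hconn : G.toSimpleGraph.Connected) (hA : A.Finite)
    {p0 : ℝ} (hp0 : 0 < p0) (hP0 : G.P0 p0) (T : Finset V)
    (hsub : hA.toFinset ⊆ T)
    (hnbr : ∀ y ∈ A, ∀ z : V, 0 < G.w y z → z ∈ T)
    (g : V → ℝ) (hg0 : ∀ y, y ∉ A → g y = 0) :
    (1 / 2) * ∑ y ∈ T, ∑ z ∈ T,
        G.w y z * ((g y - g z) * (G.meanExit A y - G.meanExit A z))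
      = ∑ y ∈ hA.toFinset, g y * G.mu y := by
  rw [← G.sym_identity T g (G.meanExit A)]
  have hterm : ∀ y ∈ T, ∑ z ∈ T, G.w y z * (g y * (G.meanExit A y - G.meanExit A z))
      = g y * G.mu y := by
    intro y _
    by_cases hgy : g y = 0
    · simp [hgy]
    · have hyA : y ∈ A := by
        by_contra h
        exact hgy (hg0 y h)
      have hmuy : G.mu y = ∑ z ∈ T, G.w y z := by
        apply tsum_eq_sum
        intro z hz
        by_contra hwz
        exact hz (hnbr y hyA z (lt_of_le_of_ne (G.w_nonneg y z) (Ne.symm hwz)))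
      have huz : ∑ z ∈ T, G.w y z * G.meanExit A z
          = ∑ z ∈ hA.toFinset, G.w y z * G.meanExit A z := by
        symm
        apply Finset.sum_subset hsub
        intro z _ hz
        rw [G.meanExit_zero_of_not_mem A (fun h => hz (hA.mem_toFinset.2 h)), mul_zero]
      have hexit := G.meanExit_mu_identity A hconn hA hp0 hP0 hyA
      have hcalc : ∑ z ∈ T, G.w y z * (g y * (G.meanExit A y - G.meanExit A z))
          = g y * ((∑ z ∈ T, G.w y z) * G.meanExit A y)
              - g y * ∑ z ∈ T, G.w y z * G.meanExit A z := by
        rw [Finset.sum_congr rfl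
          (fun z _ => (by ring :
            G.w y z * (g y * (G.meanExit A y - G.meanExit A z))
              = g y * (G.w y z * G.meanExit A y) - g y * (G.w y z * G.meanExit A z)))]
        rw [Finset.sum_sub_distrib, ← Finset.mul_sum, ← Finset.mul_sum, ← Finset.sum_mul]
      rw [hcalc, ← hmuy, huz]
      have hkey : G.mu y * G.meanExit A y
          - ∑ z ∈ hA.toFinset, G.w y z * G.meanExit A z = G.mu y := by
        linarith [hexit]
      calc g y * (G.mu y * G.meanExit A y)
            - g y * ∑ z ∈ hA.toFinset, G.w y z * G.meanExit A z
          = g y * (G.mu y * G.meanExit A y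
              - ∑ z ∈ hA.toFinset, G.w y z * G.meanExit A z) := by ring
        _ = g y * G.mu y := by rw [hkey]
  rw [Finset.sum_congr rfl hterm]
  symm
  apply Finset.sum_subset hsub
  intro z _ hz
  rw [hg0 z (fun h => hz (hA.mem_toFinset.2 h)), zero_mul]

end WeightedGraph


/-- **Corollary 3.11.** Under `(p0)`, `(VD)` and `max_{y∈B(x,R)} E_y(x,R) ≤ C·E(x,R)`,
one has `E(x,R) ≥ c·R²`. -/
theorem mexit_quadratic_lower {V : Type*} [Countable V] [Infinite V]
    (G : WeightedGraph V) (hconn : G.toSimpleGraph.Connected)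
    (p0 : ℝ) (hp0 : 0 < p0) (hP0 : G.P0 p0) (hVD : G.VD)
    (C : ℝ) (hC : 0 < C)
    (hEbar : ∀ (x : V) (R : ℝ), 0 < R → ∀ y ∈ G.ball x R,
      G.meanExit (G.ball x R) y ≤ C * G.mexit x R) :
    ∃ c : ℝ, 0 < c ∧ ∀ (x : V) (R : ℝ), 0 < R → c * R ^ 2 ≤ G.mexit x R := by
  obtain ⟨D, hD, hVDD⟩ := hVD
  refine ⟨1 / (4 * D ^ 2 * C), by positivity, ?_⟩
  intro x R hR
  set m := G.mexit x R with hm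
  set A := G.ball x R with hAdef
  have hA : A.Finite := G.ball_finite hconn x R
  set u := G.meanExit A with hudef
  have hmu : m = u x := rfl
  set FA := hA.toFinset with hFA
  set T : Finset V := FA ∪ FA.biUnion (fun z => (G.locFin z).toFinset) with hT
  have hsub : FA ⊆ T := Finset.subset_union_left
  have hnbr : ∀ y ∈ A, ∀ z : V, 0 < G.w y z → z ∈ T := by
    intro y hy z hz
    apply Finset.mem_union_right
    exact Finset.mem_biUnion.2 ⟨y, hA.mem_toFinset.2 hy, (G.locFin y).mem_toFinset.2 hz⟩
  have hxA : x ∈ A := by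
    show (G.gdist x x : ℝ) < R
    have : G.gdist x x = 0 := SimpleGraph.dist_self
    rw [this]
    simpa using hR
  -- the test function
  set f : V → ℝ := fun y => max 0 (min 1 (2 - 2 * (G.gdist x y : ℝ) / R)) with hfdef
  have hf_nonneg : ∀ y, 0 ≤ f y := fun y => le_max_left _ _
  have hf_le_one : ∀ y, f y ≤ 1 := fun y => max_le zero_le_one (min_le_left _ _)
  have hf0 : ∀ y, y ∉ A → f y = 0 := by
    intro y hy
    have hdy : R ≤ (G.gdist x y : ℝ) := not_lt.1 hy
    apply max_eq_left
    have h2 : 2 - 2 * (G.gdist x y : ℝ) / R ≤ 0 := by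
      rw [sub_nonpos, le_div_iff₀ hR]
      linarith
    exact le_trans (min_le_right _ _) h2
  have hf1 : ∀ y : V, (G.gdist x y : ℝ) < R / 2 → f y = 1 := by
    intro y hy
    have h21 : 1 ≤ 2 - 2 * (G.gdist x y : ℝ) / R := by
      have : 2 * (G.gdist x y : ℝ) / R ≤ 1 := by
        rw [div_le_one hR]
        linarith
      linarith
    show max 0 (min 1 (2 - 2 * (G.gdist x y : ℝ) / R)) = 1
    rw [min_eq_left h21, max_eq_right zero_le_one]
  -- Lipschitz property of f along edges
  have hflip : ∀ y z : V, 0 < G.w y z → |f y - f z| ≤ 2 / R := by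
    intro y z hw
    have hadj : G.toSimpleGraph.Adj y z := hw
    have hdyz : G.toSimpleGraph.dist y z ≤ 1 := by
      have := SimpleGraph.dist_le (SimpleGraph.Walk.cons hadj SimpleGraph.Walk.nil)
      simpa using this
    have htri1 : G.gdist x z ≤ G.gdist x y + 1 := by
      have := hconn.dist_triangle (u := x) (v := y) (w := z)
      have hb : G.gdist x z = G.toSimpleGraph.dist x z := rfl
      have hb2 : G.gdist x y = G.toSimpleGraph.dist x y := rfl
      omega
    have htri2 : G.gdist x y ≤ G.gdist x z + 1 := by
      have := hconn.dist_triangle (u := x) (v := z) (w := y)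
      have hdzy : G.toSimpleGraph.dist z y ≤ 1 := by
        have := SimpleGraph.dist_le (SimpleGraph.Walk.cons hadj.symm SimpleGraph.Walk.nil)
        simpa using this
      have hb : G.gdist x z = G.toSimpleGraph.dist x z := rfl
      have hb2 : G.gdist x y = G.toSimpleGraph.dist x y := rfl
      omega
    have habs : |(G.gdist x y : ℝ) - (G.gdist x z : ℝ)| ≤ 1 := by
      rw [abs_le]
      constructor
      · have := (Nat.cast_le (α := ℝ)).2 htri1
        push_cast at this
        linarith
      · have := (Nat.cast_le (α := ℝ)).2 htri2
        push_cast at this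
        linarith
    have hkey := clamp_lipschitz (2 - 2 * (G.gdist x y : ℝ) / R) (2 - 2 * (G.gdist x z : ℝ) / R)
    have heq : 2 - 2 * (G.gdist x y : ℝ) / R - (2 - 2 * (G.gdist x z : ℝ) / R)
        = (2 / R) * ((G.gdist x z : ℝ) - (G.gdist x y : ℝ)) := by
      field_simp
      ring
    calc |f y - f z| ≤ |2 - 2 * (G.gdist x y : ℝ) / R - (2 - 2 * (G.gdist x z : ℝ) / R)| := hkey
      _ = (2 / R) * |(G.gdist x z : ℝ) - (G.gdist x y : ℝ)| := by
          rw [heq, abs_mul, abs_of_pos (by positivity : (0:ℝ) < 2 / R)]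
      _ ≤ (2 / R) * 1 := by
          apply mul_le_mul_of_nonneg_left _ (by positivity : (0:ℝ) ≤ 2 / R)
          rw [abs_sub_comm]
          exact habs
      _ = 2 / R := mul_one _
  -- Green identities
  have hgreenf := G.sum_green A hconn hA hp0 hP0 T hsub hnbr f hf0
  have hgreenu := G.sum_green A hconn hA hp0 hP0 T hsub hnbr u
    (fun y hy => G.meanExit_zero_of_not_mem A hy)
  -- volumes
  set VR : ℝ := ∑ y ∈ FA, G.mu y with hVRdef
  have hV2fin : (G.ball x (R/2)).Finite := G.ball_finite hconn x (R/2)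
  set F2 := hV2fin.toFinset with hF2
  set V2 : ℝ := ∑ y ∈ F2, G.mu y with hV2def
  have hvolR : G.vol x R = VR := by
    show ∑' (y : G.ball x R), G.mu y.1 = VR
    rw [_root_.tsum_subtype (G.ball x R) G.mu]
    rw [tsum_eq_sum (s := FA) (f := (G.ball x R).indicator G.mu)]
    · apply Finset.sum_congr rfl
      intro y hy
      exact Set.indicator_of_mem (hA.mem_toFinset.1 hy) _
    · intro y hy
      exact Set.indicator_of_notMem (fun h => hy (hA.mem_toFinset.2 h)) _
  have hvol2 : G.vol x (R/2) = V2 := by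
    show ∑' (y : G.ball x (R/2)), G.mu y.1 = V2
    rw [_root_.tsum_subtype (G.ball x (R/2)) G.mu]
    rw [tsum_eq_sum (s := F2) (f := (G.ball x (R/2)).indicator G.mu)]
    · apply Finset.sum_congr rfl
      intro y hy
      exact Set.indicator_of_mem (hV2fin.mem_toFinset.1 hy) _
    · intro y hy
      exact Set.indicator_of_notMem (fun h => hy (hV2fin.mem_toFinset.2 h)) _
  have hF2sub : F2 ⊆ FA := by
    intro y hy
    have : (G.gdist x y : ℝ) < R / 2 := hV2fin.mem_toFinset.1 hy
    exact hA.mem_toFinset.2 (show (G.gdist x y : ℝ) < R by linarith)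
  have hV2pos : 0 < V2 := by
    apply Finset.sum_pos' (fun y _ => G.mu_nonneg y)
    refine ⟨x, ?_, G.mu_pos hconn x⟩
    apply hV2fin.mem_toFinset.2
    show (G.gdist x x : ℝ) < R / 2
    have : G.gdist x x = 0 := SimpleGraph.dist_self
    rw [this]
    simpa using (by linarith : (0:ℝ) < R / 2)
  have hVRV2 : VR ≤ D * V2 := by
    rw [← hvolR, ← hvol2]
    have := hVDD x (R/2) (by linarith)
    have h2 : 2 * (R / 2) = R := by ring
    rwa [h2] at this
  have hVRpos : 0 < VR :=
    lt_of_lt_of_le hV2pos (Finset.sum_le_sum_of_subset_of_nonneg hF2sub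
      (fun y _ _ => G.mu_nonneg y))
  -- the three quadratic forms
  set a : ℝ := ∑ y ∈ T, ∑ z ∈ T, G.w y z * ((f y - f z) * (u y - u z)) with hadef
  set af : ℝ := ∑ y ∈ T, ∑ z ∈ T, G.w y z * ((f y - f z) * (f y - f z)) with hafdef
  set au : ℝ := ∑ y ∈ T, ∑ z ∈ T, G.w y z * ((u y - u z) * (u y - u z)) with haudef
  -- Step 1 : 2 * V2 ≤ a
  have hX : V2 ≤ ∑ y ∈ FA, f y * G.mu y := by
    calc V2 = ∑ y ∈ F2, f y * G.mu y := by
          apply Finset.sum_congr rfl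
          intro y hy
          rw [hf1 y (hV2fin.mem_toFinset.1 hy), one_mul]
      _ ≤ ∑ y ∈ FA, f y * G.mu y := by
          apply Finset.sum_le_sum_of_subset_of_nonneg hF2sub
          intro y _ _
          exact mul_nonneg (hf_nonneg y) (G.mu_nonneg y)
  have h2V2a : 2 * V2 ≤ a := by
    have : (1/2) * a = ∑ y ∈ FA, f y * G.mu y := hgreenf
    linarith
  have ha_nonneg : 0 ≤ a := by linarith
  -- Step 2 : au ≤ 2 * (C * m) * VR
  have hCm_nonneg : 0 ≤ C * m := by
    apply mul_nonneg (le_of_lt hC)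
    rw [hm]
    exact G.meanExit_nonneg (G.ball x R) x
  have hau : au ≤ 2 * (C * m) * VR := by
    have h1 : (1/2) * au = ∑ y ∈ FA, u y * G.mu y := hgreenu
    have h2 : ∑ y ∈ FA, u y * G.mu y ≤ ∑ y ∈ FA, (C * m) * G.mu y := by
      apply Finset.sum_le_sum
      intro y hy
      apply mul_le_mul_of_nonneg_right _ (G.mu_nonneg y)
      exact hEbar x R hR y (hA.mem_toFinset.1 hy)
    rw [← Finset.mul_sum] at h2
    linarith
  have hau_nonneg : 0 ≤ au := by
    apply Finset.sum_nonneg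
    intro y _
    apply Finset.sum_nonneg
    intro z _
    exact mul_nonneg (G.w_nonneg y z) (mul_self_nonneg _)
  have haf_nonneg : 0 ≤ af := by
    apply Finset.sum_nonneg
    intro y _
    apply Finset.sum_nonneg
    intro z _
    exact mul_nonneg (G.w_nonneg y z) (mul_self_nonneg _)
  -- Step 3 : af ≤ (4 / R^2) * (2 * VR)
  have hrowbound : ∀ y ∈ FA, ∑ z ∈ T, G.w y z ≤ G.mu y := fun y _ =>
    Summable.sum_le_tsum T (fun z _ => G.w_nonneg y z) (G.w_summable y)
  have haf : af ≤ (4 / R^2) * (2 * VR) := by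
    have hterm : ∀ y ∈ T, ∀ z ∈ T, G.w y z * ((f y - f z) * (f y - f z))
        ≤ (4 / R^2) * (G.w y z * ((if y ∈ FA then (1:ℝ) else 0) + (if z ∈ FA then (1:ℝ) else 0))) := by
      intro y _ z _
      by_cases hw : 0 < G.w y z
      · by_cases hyz : y ∈ A ∨ z ∈ A
        · have h1 : |f y - f z| ≤ 2 / R := hflip y z hw
          have h2 : (f y - f z) * (f y - f z) ≤ 4 / R^2 := by
            have h3 : (f y - f z) * (f y - f z) = |f y - f z| * |f y - f z| :=
              (abs_mul_abs_self _).symm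
            rw [h3]
            calc |f y - f z| * |f y - f z| ≤ (2/R) * (2/R) :=
                  mul_le_mul h1 h1 (abs_nonneg _) (by positivity)
              _ = 4 / R^2 := by
                  field_simp
                  ring
          have hind : (1:ℝ) ≤ (if y ∈ FA then (1:ℝ) else 0) + (if z ∈ FA then (1:ℝ) else 0) := by
            rcases hyz with h | h
            · rw [if_pos (hA.mem_toFinset.2 h)]
              have : (0:ℝ) ≤ if z ∈ FA then (1:ℝ) else 0 := by positivity
              linarith
            · rw [if_pos (hA.mem_toFinset.2 h)]
              have : (0:ℝ) ≤ if y ∈ FA then (1:ℝ) else 0 := by positivity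
              linarith
          calc G.w y z * ((f y - f z) * (f y - f z)) ≤ G.w y z * (4 / R^2) :=
                mul_le_mul_of_nonneg_left h2 (G.w_nonneg y z)
            _ = (4 / R^2) * (G.w y z * 1) := by ring
            _ ≤ (4 / R^2) * (G.w y z * ((if y ∈ FA then (1:ℝ) else 0) + (if z ∈ FA then (1:ℝ) else 0))) := by
                apply mul_le_mul_of_nonneg_left _ (by positivity : (0:ℝ) ≤ 4 / R^2)
                exact mul_le_mul_of_nonneg_left hind (G.w_nonneg y z)
        · push_neg at hyz
          rw [hf0 y hyz.1, hf0 z hyz.2]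
          simp only [sub_zero, sub_self, mul_zero, zero_mul]
          positivity
      · have hw0 : G.w y z = 0 := le_antisymm (not_lt.1 hw) (G.w_nonneg y z)
        rw [hw0]
        simp
    have hsum1 : af ≤ (4 / R^2) * ∑ y ∈ T, ∑ z ∈ T,
        G.w y z * ((if y ∈ FA then (1:ℝ) else 0) + (if z ∈ FA then (1:ℝ) else 0)) := by
      rw [Finset.mul_sum]
      apply Finset.sum_le_sum
      intro y hy
      rw [Finset.mul_sum]
      apply Finset.sum_le_sum
      intro z hz
      exact hterm y hy z hz
    have hsplit : ∑ y ∈ T, ∑ z ∈ T,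
        G.w y z * ((if y ∈ FA then (1:ℝ) else 0) + (if z ∈ FA then (1:ℝ) else 0)) ≤ 2 * VR := by
      have he : ∀ y ∈ T, ∀ z ∈ T, G.w y z * ((if y ∈ FA then (1:ℝ) else 0) + (if z ∈ FA then (1:ℝ) else 0))
          = (if y ∈ FA then G.w y z else 0) + (if z ∈ FA then G.w y z else 0) := by
        intro y _ z _
        by_cases h1 : y ∈ FA <;> by_cases h2 : z ∈ FA <;> simp [h1, h2] <;> ring
      have hsum2 : ∑ y ∈ T, ∑ z ∈ T, (if y ∈ FA then G.w y z else 0) ≤ VR := by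
        calc ∑ y ∈ T, ∑ z ∈ T, (if y ∈ FA then G.w y z else 0)
            = ∑ y ∈ T, (if y ∈ FA then ∑ z ∈ T, G.w y z else 0) := by
              apply Finset.sum_congr rfl
              intro y _
              split <;> simp
          _ ≤ ∑ y ∈ T, (if y ∈ FA then G.mu y else 0) := by
              apply Finset.sum_le_sum
              intro y _
              split
              · exact hrowbound y (by assumption)
              · exact le_refl 0
          _ = ∑ y ∈ FA, G.mu y := by
              rw [Finset.sum_ite_mem T FA G.mu, Finset.inter_eq_right.2 hsub]
          _ = VR := rfl
      have hsum3 : ∑ y ∈ T, ∑ z ∈ T, (if z ∈ FA then G.w y z else 0) ≤ VR := by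
        rw [Finset.sum_comm]
        calc ∑ z ∈ T, ∑ y ∈ T, (if z ∈ FA then G.w y z else 0)
            = ∑ z ∈ T, (if z ∈ FA then ∑ y ∈ T, G.w z y else 0) := by
              apply Finset.sum_congr rfl
              intro z _
              split
              · apply Finset.sum_congr rfl
                intro y _
                exact G.w_symm _ _
              · simp
          _ ≤ ∑ z ∈ T, (if z ∈ FA then G.mu z else 0) := by
              apply Finset.sum_le_sum
              intro z _
              split
              · exact hrowbound z (by assumption)
              · exact le_refl 0
          _ = ∑ z ∈ FA, G.mu z := by
              rw [Finset.sum_ite_mem T FA G.mu, Finset.inter_eq_right.2 hsub]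
          _ = VR := rfl
      calc ∑ y ∈ T, ∑ z ∈ T,
            G.w y z * ((if y ∈ FA then (1:ℝ) else 0) + (if z ∈ FA then (1:ℝ) else 0))
          = (∑ y ∈ T, ∑ z ∈ T, (if y ∈ FA then G.w y z else 0))
            + ∑ y ∈ T, ∑ z ∈ T, (if z ∈ FA then G.w y z else 0) := by
            rw [← Finset.sum_add_distrib]
            apply Finset.sum_congr rfl
            intro y hy
            rw [← Finset.sum_add_distrib]
            exact Finset.sum_congr rfl fun z hz => he y hy z hz
        _ ≤ 2 * VR := by linarith
    calc af ≤ (4 / R^2) * ∑ y ∈ T, ∑ z ∈ T,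
          G.w y z * ((if y ∈ FA then (1:ℝ) else 0) + (if z ∈ FA then (1:ℝ) else 0)) := hsum1
      _ ≤ (4 / R^2) * (2 * VR) :=
          mul_le_mul_of_nonneg_left hsplit (by positivity)
  -- Step 4 : Cauchy-Schwarz : a^2 ≤ af * au
  have hCS : a ^ 2 ≤ af * au := by
    have ha' : a = ∑ p ∈ T ×ˢ T,
        (Real.sqrt (G.w p.1 p.2) * (f p.1 - f p.2)) * (Real.sqrt (G.w p.1 p.2) * (u p.1 - u p.2)) := by
      rw [Finset.sum_product]
      apply Finset.sum_congr rfl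
      intro y _
      apply Finset.sum_congr rfl
      intro z _
      have : Real.sqrt (G.w y z) * Real.sqrt (G.w y z) = G.w y z :=
        Real.mul_self_sqrt (G.w_nonneg y z)
      calc G.w y z * ((f y - f z) * (u y - u z))
          = (Real.sqrt (G.w y z) * Real.sqrt (G.w y z)) * ((f y - f z) * (u y - u z)) := by rw [this]
        _ = (Real.sqrt (G.w y z) * (f y - f z)) * (Real.sqrt (G.w y z) * (u y - u z)) := by ring
    have haf' : af = ∑ p ∈ T ×ˢ T, (Real.sqrt (G.w p.1 p.2) * (f p.1 - f p.2)) ^ 2 := by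
      rw [Finset.sum_product]
      apply Finset.sum_congr rfl
      intro y _
      apply Finset.sum_congr rfl
      intro z _
      have : Real.sqrt (G.w y z) * Real.sqrt (G.w y z) = G.w y z :=
        Real.mul_self_sqrt (G.w_nonneg y z)
      calc G.w y z * ((f y - f z) * (f y - f z))
          = (Real.sqrt (G.w y z) * Real.sqrt (G.w y z)) * ((f y - f z) * (f y - f z)) := by rw [this]
        _ = (Real.sqrt (G.w y z) * (f y - f z)) ^ 2 := by ring
    have hau' : au = ∑ p ∈ T ×ˢ T, (Real.sqrt (G.w p.1 p.2) * (u p.1 - u p.2)) ^ 2 := by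
      rw [Finset.sum_product]
      apply Finset.sum_congr rfl
      intro y _
      apply Finset.sum_congr rfl
      intro z _
      have : Real.sqrt (G.w y z) * Real.sqrt (G.w y z) = G.w y z :=
        Real.mul_self_sqrt (G.w_nonneg y z)
      calc G.w y z * ((u y - u z) * (u y - u z))
          = (Real.sqrt (G.w y z) * Real.sqrt (G.w y z)) * ((u y - u z) * (u y - u z)) := by rw [this]
        _ = (Real.sqrt (G.w y z) * (u y - u z)) ^ 2 := by ring
    rw [ha', haf', hau']
    exact Finset.sum_mul_sq_le_sq_mul_sq (T ×ˢ T) _ _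
  -- Combine everything
  have hfinal : 4 * V2^2 * R^2 ≤ 16 * (C * m) * (D * V2)^2 := by
    have h1 : (2 * V2)^2 ≤ a^2 := by
      apply pow_le_pow_left₀ (by linarith) h2V2a
    have h2 : af * au ≤ ((4 / R^2) * (2 * VR)) * (2 * (C * m) * VR) := by
      apply mul_le_mul haf hau hau_nonneg (by positivity)
    have h3 : (2 * V2)^2 ≤ ((4 / R^2) * (2 * VR)) * (2 * (C * m) * VR) := by
      calc (2 * V2)^2 ≤ a^2 := h1
        _ ≤ af * au := hCS
        _ ≤ ((4 / R^2) * (2 * VR)) * (2 * (C * m) * VR) := h2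
    have h4 : ((4 / R^2) * (2 * VR)) * (2 * (C * m) * VR) = 16 * (C * m) * VR^2 / R^2 := by
      field_simp
      ring
    rw [h4] at h3
    have h5 : 4 * V2^2 * R^2 ≤ 16 * (C * m) * VR^2 := by
      rw [← le_div_iff₀ (by positivity : (0:ℝ) < R^2)]
      calc 4 * V2^2 = (2 * V2)^2 := by ring
        _ ≤ 16 * (C * m) * VR^2 / R^2 := h3
    have h6 : VR^2 ≤ (D * V2)^2 := pow_le_pow_left₀ (le_of_lt hVRpos) hVRV2 2
    calc 4 * V2^2 * R^2 ≤ 16 * (C * m) * VR^2 := h5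
      _ ≤ 16 * (C * m) * (D * V2)^2 := by
          apply mul_le_mul_of_nonneg_left h6 (by positivity)
  have h4V2 : (0:ℝ) < 4 * V2^2 := by positivity
  have hgoal : R^2 ≤ 4 * C * D^2 * m := by
    have h8 : R^2 * (4 * V2^2) ≤ (4 * C * D^2 * m) * (4 * V2^2) := by
      calc R^2 * (4 * V2^2) = 4 * V2^2 * R^2 := by ring
        _ ≤ 16 * (C * m) * (D * V2)^2 := hfinal
        _ = (4 * C * D^2 * m) * (4 * V2^2) := by ring
    exact (mul_le_mul_iff_of_pos_right h4V2).1 h8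
  rw [div_mul_eq_mul_div, one_mul, div_le_iff₀ (by positivity : (0:ℝ) < 4 * D^2 * C)]
  exact le_trans hgoal (le_of_eq (by ring))
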